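/- For any continuous distribution function F on the real line with characteristic function f̂ (i.e., f̂(ω) = E[e^{iωX}] for X ~ F), and any point x at which F is continuous, one has F(x) = 1/2 - (1/π) lim_{T→∞} ∫_{1/T}^{T} ω^{-1} Im{e^{-iωx} f̂(ω)} dω (the Gil-Pelaez inversion formula). -/

import Mathlib

open MeasureTheory Filter Real Set Topology

-- sinc interval integrable
lemma gp_intInt (a b : ℝ) : IntervalIntegrable (fun v => Real.sin v / v) volume a b := by
  apply IntervalIntegrable.mono_fun (intervalIntegrable_const (c := (1:ℝ)))
  · exact ((Real.continuous_sin.measurable.div measurable_id).aestronglyMeasurable).restrict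
  · refine ae_of_all _ fun v => ?_
    simp only [Real.norm_eq_abs, abs_one, abs_div]
    rcases eq_or_ne v 0 with h | h
    · simp [h]
    · exact div_le_one_of_le₀ (Real.abs_sin_le_abs (x := v)) (abs_nonneg v)

noncomputable def gpSi (R : ℝ) : ℝ := ∫ v in (0:ℝ)..R, Real.sin v / v

lemma gpSi_cont : Continuous gpSi :=
  intervalIntegral.continuous_primitive gp_intInt 0

lemma gpSi_zero : gpSi 0 = 0 := by simp [gpSi]

lemma gpSi_neg (R : ℝ) : gpSi (-R) = - gpSi R := by
  have h := intervalIntegral.integral_comp_neg (a := (0:ℝ)) (b := R) (fun v => Real.sin v / v)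
  simp only [Real.sin_neg, neg_div_neg_eq, neg_zero] at h
  unfold gpSi
  rw [h]
  exact intervalIntegral.integral_symm _ _

lemma gpSi_sub (a b : ℝ) : (∫ v in a..b, Real.sin v / v) = gpSi b - gpSi a := by
  unfold gpSi
  rw [intervalIntegral.integral_interval_sub_left (gp_intInt 0 b) (gp_intInt 0 a)]

lemma gp_exp_int {b : ℝ} (hb : 0 < b) : ∫ s in Ioi (0:ℝ), Real.exp (-(b*s)) = b⁻¹ := by
  have h := integral_comp_mul_left_Ioi (fun x => Real.exp (-x)) 0 hb
  simp only [mul_zero, integral_exp_neg_Ioi, neg_zero, Real.exp_zero, smul_eq_mul, mul_one] at h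
  exact h

lemma gp_inner (s : ℝ) {R : ℝ} (hR : 0 ≤ R) :
    (∫ t in Ioc (0:ℝ) R, Real.sin t * Real.exp (-(t*s)))
      = ((Complex.exp ((-s + Complex.I)*R) - 1)/(-s + Complex.I)).im := by
  have hc : (-s + Complex.I : ℂ) ≠ 0 := by
    intro h
    have := congrArg Complex.im h
    simp at this
  have him : ∀ t : ℝ, Real.sin t * Real.exp (-(t*s))
      = (Complex.exp ((-s + Complex.I)*t)).im := by
    intro t
    rw [Complex.exp_im]
    norm_num [Complex.mul_re, Complex.mul_im]
    ring_nf
  have hint : IntegrableOn (fun t : ℝ => Complex.exp ((-s + Complex.I)*t)) (Ioc 0 R) volume := by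
    apply Continuous.integrableOn_Ioc
    exact Complex.continuous_exp.comp (continuous_const.mul Complex.continuous_ofReal)
  calc (∫ t in Ioc (0:ℝ) R, Real.sin t * Real.exp (-(t*s)))
      = ∫ t in Ioc (0:ℝ) R, (Complex.exp ((-s + Complex.I)*t)).im := by
        exact integral_congr_ae (ae_of_all _ fun t => him t)
    _ = (∫ t in Ioc (0:ℝ) R, Complex.exp ((-s + Complex.I)*t)).im := by
        exact (integral_im hint).symm ▸ rfl
    _ = ((Complex.exp ((-s + Complex.I)*R) - 1)/(-s + Complex.I)).im := by
        rw [← intervalIntegral.integral_of_le hR, integral_exp_mul_complex hc]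
        norm_num

lemma gpSi_eq {R : ℝ} (hR : 0 < R) :
    gpSi R = ∫ s in Ioi (0:ℝ),
      ((Complex.exp ((-s + Complex.I)*R) - 1)/(-s + Complex.I)).im := by
  have h1f : AEStronglyMeasurable (fun p : ℝ × ℝ => Real.sin p.1 * Real.exp (-(p.1*p.2)))
      ((volume.restrict (Ioc (0:ℝ) R)).prod (volume.restrict (Ioi (0:ℝ)))) := by
    exact ((Real.continuous_sin.comp continuous_fst).mul
      (Real.continuous_exp.comp (continuous_fst.mul continuous_snd).neg)).aestronglyMeasurable
  have hsect : ∀ᵐ t ∂(volume.restrict (Ioc (0:ℝ) R)),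
      Integrable (fun s => Real.sin t * Real.exp (-(t*s))) (volume.restrict (Ioi (0:ℝ))) := by
    filter_upwards [ae_restrict_mem measurableSet_Ioc] with t ht
    have := (exp_neg_integrableOn_Ioi 0 ht.1).const_mul (Real.sin t)
    simpa [neg_mul] using this
  have hnorm : Integrable (fun t => ∫ s in Ioi (0:ℝ), ‖Real.sin t * Real.exp (-(t*s))‖)
      (volume.restrict (Ioc (0:ℝ) R)) := by
    have hbase : Integrable (fun t : ℝ => |Real.sin t| * t⁻¹) (volume.restrict (Ioc (0:ℝ) R)) := by
      apply Integrable.mono' (g := fun _ => (1:ℝ))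
      · exact integrableOn_const measure_Ioc_lt_top.ne
      · exact ((Real.continuous_sin.measurable.abs.mul measurable_inv).aestronglyMeasurable).restrict
      · filter_upwards [ae_restrict_mem measurableSet_Ioc] with t ht
        rw [Real.norm_eq_abs, abs_mul, abs_abs, abs_inv, abs_of_pos ht.1]
        calc |Real.sin t| * t⁻¹ ≤ t * t⁻¹ := by
              apply mul_le_mul_of_nonneg_right _ (inv_nonneg.mpr ht.1.le)
              simpa [abs_of_pos ht.1] using Real.abs_sin_le_abs (x := t)
          _ = 1 := mul_inv_cancel₀ ht.1.ne'
    apply hbase.congr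
    filter_upwards [ae_restrict_mem measurableSet_Ioc] with t ht
    have : (fun s => ‖Real.sin t * Real.exp (-(t*s))‖)
        = fun s => |Real.sin t| * Real.exp (-(t*s)) := by
      funext s
      rw [Real.norm_eq_abs, abs_mul, abs_of_pos (Real.exp_pos _)]
    rw [this, integral_const_mul _ _, gp_exp_int ht.1]
  have hint : Integrable (Function.uncurry fun t s => Real.sin t * Real.exp (-(t*s)))
      ((volume.restrict (Ioc (0:ℝ) R)).prod (volume.restrict (Ioi (0:ℝ)))) :=
    (integrable_prod_iff h1f).mpr ⟨hsect, hnorm⟩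
  have hswap := integral_integral_swap hint
  calc gpSi R = ∫ t in Ioc (0:ℝ) R, Real.sin t / t := by
        rw [gpSi, intervalIntegral.integral_of_le hR.le]
    _ = ∫ t in Ioc (0:ℝ) R, ∫ s in Ioi (0:ℝ), Real.sin t * Real.exp (-(t*s)) := by
        apply integral_congr_ae
        filter_upwards [ae_restrict_mem measurableSet_Ioc] with t ht
        rw [integral_const_mul _ _, gp_exp_int ht.1, div_eq_mul_inv]
    _ = ∫ s in Ioi (0:ℝ), ∫ t in Ioc (0:ℝ) R, Real.sin t * Real.exp (-(t*s)) := hswap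
    _ = ∫ s in Ioi (0:ℝ),
        ((Complex.exp ((-s + Complex.I)*R) - 1)/(-s + Complex.I)).im := by
        exact integral_congr_ae (ae_of_all _ fun s => gp_inner s hR.le)

lemma gp_c_ne (s : ℝ) : (-s + Complex.I : ℂ) ≠ 0 := by
  intro h
  have := congrArg Complex.im h
  simp at this

lemma gp_abs_c (s : ℝ) : 1 ≤ ‖(-s + Complex.I : ℂ)‖ := by
  have h := Complex.abs_im_le_norm (-s + Complex.I)
  simpa using h

lemma gpSi_bound {R : ℝ} (hR : 0 < R) : |gpSi R - π/2| ≤ R⁻¹ := by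
  have hIm1 : ∀ s : ℝ, (((-1:ℂ))/(-s + Complex.I)).im = (1+s^2)⁻¹ := by
    intro s
    rw [Complex.div_im]
    simp [Complex.normSq_apply]
    ring_nf
  have herr_bound : ∀ s : ℝ, 0 < s →
      ‖(Complex.exp ((-s + Complex.I)*R)/(-s + Complex.I)).im‖ ≤ Real.exp (-(R*s)) := by
    intro s _
    rw [Real.norm_eq_abs]
    calc |(Complex.exp ((-s + Complex.I)*R)/(-s + Complex.I)).im|
        ≤ ‖Complex.exp ((-s + Complex.I)*R)/(-s + Complex.I)‖ :=
          Complex.abs_im_le_norm _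
      _ = Real.exp (-(R*s)) / ‖(-s + Complex.I : ℂ)‖ := by
          rw [norm_div, Complex.norm_exp]
          congr 2
          simp [Complex.mul_re]
          ring
      _ ≤ Real.exp (-(R*s)) := div_le_self (Real.exp_nonneg _) (gp_abs_c s)
  have hexpint : IntegrableOn (fun s : ℝ => Real.exp (-(R*s))) (Ioi (0:ℝ)) := by
    simpa [neg_mul] using exp_neg_integrableOn_Ioi 0 hR
  have herr_cont : Continuous (fun s : ℝ => (Complex.exp ((-s + Complex.I)*R)/(-s + Complex.I)).im) := by
    apply Complex.continuous_im.comp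
    apply Continuous.div
    · exact Complex.continuous_exp.comp
        (((Complex.continuous_ofReal.comp continuous_id).neg.add continuous_const).mul continuous_const)
    · exact (Complex.continuous_ofReal.comp continuous_id).neg.add continuous_const
    · exact fun s => gp_c_ne s
  have herr_int : IntegrableOn (fun s : ℝ => (Complex.exp ((-s + Complex.I)*R)/(-s + Complex.I)).im)
      (Ioi (0:ℝ)) := by
    apply Integrable.mono' hexpint herr_cont.aestronglyMeasurable.restrict
    filter_upwards [ae_restrict_mem measurableSet_Ioi] with s hs
    exact herr_bound s hs
  have hone_int : IntegrableOn (fun s : ℝ => ((-1:ℂ)/(-s + Complex.I)).im) (Ioi (0:ℝ)) := by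
    apply (integrable_inv_one_add_sq.integrableOn).congr
    · exact ae_of_all _ fun s => (hIm1 s).symm
  have hsplit : gpSi R = (∫ s in Ioi (0:ℝ), (Complex.exp ((-s + Complex.I)*R)/(-s + Complex.I)).im)
      + π/2 := by
    rw [gpSi_eq hR]
    have : ∀ s : ℝ, ((Complex.exp ((-s + Complex.I)*R) - 1)/(-s + Complex.I)).im
        = (Complex.exp ((-s + Complex.I)*R)/(-s + Complex.I)).im + ((-1:ℂ)/(-s + Complex.I)).im := by
      intro s
      rw [← Complex.add_im, ← add_div]
      ring_nf
    rw [integral_congr_ae (ae_of_all _ this), integral_add herr_int hone_int]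
    congr 1
    rw [integral_congr_ae (ae_of_all _ fun s => hIm1 s)]
    have := integral_Ioi_inv_one_add_sq (i := (0:ℝ))
    simpa using this
  rw [hsplit]
  simp only [add_sub_cancel_right]
  calc |∫ s in Ioi (0:ℝ), (Complex.exp ((-s + Complex.I)*R)/(-s + Complex.I)).im|
      ≤ ∫ s in Ioi (0:ℝ), Real.exp (-(R*s)) := by
        rw [← Real.norm_eq_abs]
        apply norm_integral_le_of_norm_le hexpint
        filter_upwards [ae_restrict_mem measurableSet_Ioi] with s hs
        exact herr_bound s hs
    _ = R⁻¹ := gp_exp_int hR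

lemma tendsto_gpSi : Tendsto gpSi atTop (𝓝 (π/2)) := by
  have h0 : Tendsto (fun R => gpSi R - π/2) atTop (𝓝 0) := by
    apply squeeze_zero_norm' _ tendsto_inv_atTop_zero
    filter_upwards [eventually_gt_atTop (0:ℝ)] with R hR
    simpa [Real.norm_eq_abs] using gpSi_bound hR
  have := h0.add_const (π/2)
  simpa using this

lemma gpSi_bdd : ∃ M : ℝ, 0 ≤ M ∧ ∀ R : ℝ, |gpSi R| ≤ M := by
  obtain ⟨C, hC⟩ := (eventually_atTop.mp (tendsto_gpSi.eventually
    (eventually_le_nhds (lt_add_one (π/2)))))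
  obtain ⟨C2, hC2⟩ := (eventually_atTop.mp (tendsto_gpSi.eventually
    (eventually_ge_nhds (sub_one_lt (π/2)))))
  obtain ⟨D, hD⟩ := (isCompact_Icc (a := -(|C|+|C2|)) (b := |C|+|C2|)).exists_bound_of_continuousOn
    gpSi_cont.continuousOn
  refine ⟨max (|π/2|+1) (max D 0) + max (|π/2|+1) (max D 0), by positivity, fun R => ?_⟩
  have key : ∀ R : ℝ, |gpSi R| ≤ max (|π/2|+1) (max D 0) := by
    intro R
    rcases le_or_gt R (|C|+|C2|) with h | h
    · rcases le_or_gt (-(|C|+|C2|)) R with h' | h'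
      · exact le_trans (hD R ⟨h', h⟩) (le_max_of_le_right (le_max_left _ _))
      · -- R < -(|C|+|C2|) ≤ -C2... use oddness: -R ≥ |C|+|C2| ≥ max C C2
        have h1 : C ≤ -R := by nlinarith [abs_nonneg C, abs_nonneg C2, le_abs_self C, le_abs_self C2]
        have h2 : C2 ≤ -R := by nlinarith [abs_nonneg C, abs_nonneg C2, le_abs_self C, le_abs_self C2]
        have := hC (-R) h1
        have := hC2 (-R) h2
        rw [show R = -(-R) by ring, gpSi_neg, abs_neg]
        refine le_max_of_le_left ?_
        rw [abs_le]
        constructor <;> [skip; skip] <;>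
          · rcases abs_cases (π/2) with ⟨he, _⟩ | ⟨he, _⟩ <;> linarith
    · have h1 : C ≤ R := by nlinarith [abs_nonneg C, abs_nonneg C2, le_abs_self C, le_abs_self C2]
      have h2 : C2 ≤ R := by nlinarith [abs_nonneg C, abs_nonneg C2, le_abs_self C, le_abs_self C2]
      have := hC R h1
      have := hC2 R h2
      refine le_max_of_le_left ?_
      rw [abs_le]
      constructor <;> [skip; skip] <;>
        · rcases abs_cases (π/2) with ⟨he, _⟩ | ⟨he, _⟩ <;> linarith
  calc |gpSi R| ≤ max (|π/2|+1) (max D 0) := key R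
    _ ≤ _ := by
      have : (0:ℝ) ≤ max (|π/2|+1) (max D 0) := le_max_of_le_right (le_max_right _ _)
      linarith

lemma tendsto_gpSi_pt {u : ℝ} (hu : u ≠ 0) :
    Tendsto (fun T : ℝ => gpSi (u*T) - gpSi (u*(1/T))) atTop
      (𝓝 (if 0 < u then π/2 else -(π/2))) := by
  have h2 : Tendsto (fun T : ℝ => gpSi (u*(1/T))) atTop (𝓝 0) := by
    have h2a : Tendsto (fun T : ℝ => u*(1/T)) atTop (𝓝 0) := by
      simpa using tendsto_inv_atTop_zero.const_mul u
    have := (gpSi_cont.tendsto 0).comp h2a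
    simpa [gpSi_zero, Function.comp_def] using this
  have h1 : Tendsto (fun T : ℝ => gpSi (u*T)) atTop (𝓝 (if 0 < u then π/2 else -(π/2))) := by
    rcases hu.lt_or_gt with hneg | hpos
    · have hmul : Tendsto (fun T : ℝ => (-u)*T) atTop atTop :=
        Tendsto.const_mul_atTop (by linarith) tendsto_id
      have := (tendsto_gpSi.comp hmul).neg
      rw [if_neg (not_lt.mpr hneg.le)]
      apply this.congr
      intro T
      simp only [Function.comp_apply]
      rw [← gpSi_neg]
      ring_nf
    · rw [if_pos hpos]
      exact tendsto_gpSi.comp (Tendsto.const_mul_atTop hpos tendsto_id)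
  simpa using h1.sub h2

lemma gp_inner2 {T : ℝ} (hT : 1 ≤ T) (u : ℝ) :
    (∫ ω in (1/T)..T, Real.sin (ω*u)/ω) = gpSi (u*T) - gpSi (u*(1/T)) := by
  have hT0 : (0:ℝ) < T := lt_of_lt_of_le one_pos hT
  have h1T : 0 < 1/T := by positivity
  have h1TT : 1/T ≤ T := le_trans (by rw [div_le_one hT0]; exact hT) hT
  rcases eq_or_ne u 0 with h0 | h0
  · simp [h0, gpSi_zero]
  · have hcong : EqOn (fun ω => Real.sin (ω*u)/ω)
        (fun ω => u * ((fun v => Real.sin v / v) (u*ω))) (uIcc (1/T) T) := by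
      intro ω hω
      rw [uIcc_of_le h1TT] at hω
      have hω0 : ω ≠ 0 := ne_of_gt (lt_of_lt_of_le h1T hω.1)
      simp only
      rw [mul_comm ω u]
      field_simp
    rw [intervalIntegral.integral_congr hcong, intervalIntegral.integral_const_mul,
      intervalIntegral.integral_comp_mul_left (fun v => Real.sin v / v) h0,
      smul_eq_mul, ← mul_assoc, mul_inv_cancel₀ h0, one_mul, gpSi_sub]

/-- Gil-Pelaez inversion formula: for a continuous distribution function `F` on ℝ
with characteristic function `φ`, at every continuity point `x`,
`F x = 1/2 - (1/π) * lim_{T→∞} ∫_{1/T}^T Im(e^{-iωx} φ ω)/ω dω`. -/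
theorem gil_pelaez_inversion
    (μ : Measure ℝ) [IsProbabilityMeasure μ]
    (F : ℝ → ℝ) (hF : ∀ t, F t = (μ (Set.Iic t)).toReal)
    (hFcont : Continuous F)
    (φ : ℝ → ℂ) (hφ : ∀ ω, φ ω = ∫ t, Complex.exp (Complex.I * ω * t) ∂μ)
    (x : ℝ) (hx : ContinuousAt F x) :
    Tendsto (fun T : ℝ =>
        ∫ ω in (1/T)..T, (Complex.exp (-(Complex.I * ω * x)) * φ ω).im / ω)
      atTop (nhds (π * (1/2 - F x))) := by
  obtain ⟨M, hM0, hM⟩ := gpSi_bdd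
  -- measure facts
  have hIio : (μ (Iio x)).toReal = F x := by
    apply le_antisymm
    · rw [hF x]
      exact ENNReal.toReal_mono (measure_ne_top μ _) (measure_mono Iio_subset_Iic_self)
    · have hseq : Tendsto (fun n : ℕ => F (x - 1/(n+1))) atTop (𝓝 (F x)) := by
        have hx' : Tendsto (fun n : ℕ => x - 1/(n+1 : ℝ)) atTop (𝓝 x) := by
          simpa using (tendsto_const_nhds (x := x)).sub tendsto_one_div_add_atTop_nhds_zero_nat
        exact (hFcont.tendsto x).comp hx'
      apply le_of_tendsto hseq
      refine Eventually.of_forall fun n => ?_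
      rw [hF]
      apply ENNReal.toReal_mono (measure_ne_top μ _)
      apply measure_mono
      apply Iic_subset_Iio.mpr
      have : (0:ℝ) < 1/(n+1) := by positivity
      linarith
  have hsing : μ {x} = 0 := by
    have hd : Disjoint (Iio x) ({x} : Set ℝ) := by simp
    have hm := measure_union (μ := μ) hd (measurableSet_singleton x)
    rw [Iio_union_right] at hm
    have h1 : (μ (Iic x)).toReal = (μ (Iio x)).toReal + (μ {x}).toReal := by
      rw [hm, ENNReal.toReal_add (measure_ne_top μ _) (measure_ne_top μ _)]
    have h2 : (μ {x}).toReal = 0 := by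
      have := hF x
      linarith [hIio]
    rcases (ENNReal.toReal_eq_zero_iff _).mp h2 with h | h
    · exact h
    · exact absurd h (measure_ne_top μ _)
  have hae_ne : ∀ᵐ t ∂μ, t ≠ x := by
    rw [ae_iff]
    convert hsing using 2
    ext t
    simp
  have hIoi : (μ (Ioi x)).toReal = 1 - F x := by
    have hc := measure_compl measurableSet_Iic (measure_ne_top μ (Iic x))
    rw [compl_Iic] at hc
    rw [hc, measure_univ, ENNReal.toReal_sub_of_le prob_le_one (by simp)]
    simp [hF x]
  -- the approximating functions
  set G : ℝ → ℝ → ℝ := fun T t => gpSi ((t-x)*T) - gpSi ((t-x)*(1/T)) with hG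
  -- Step 1: eventual equality with ∫ G T dμ
  have hEq : ∀ᶠ T in atTop,
      (∫ ω in (1/T)..T, (Complex.exp (-(Complex.I * ω * x)) * φ ω).im / ω)
        = ∫ t, G T t ∂μ := by
    filter_upwards [eventually_ge_atTop (1:ℝ)] with T hT
    have hT0 : (0:ℝ) < T := lt_of_lt_of_le one_pos hT
    have h1T : 0 < 1/T := by positivity
    have h1TT : 1/T ≤ T := le_trans (by rw [div_le_one hT0]; exact hT) hT
    set ρ := volume.restrict (Ioc (1/T) T) with hρ
    have : IsFiniteMeasure ρ := by
      constructor
      rw [hρ, Measure.restrict_apply_univ]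
      exact measure_Ioc_lt_top
    -- characteristic function pointwise identity
    have hchar : ∀ ω : ℝ, (Complex.exp (-(Complex.I*ω*x)) * φ ω).im
        = ∫ t, Real.sin (ω*(t-x)) ∂μ := by
      intro ω
      have hint2 : Integrable (fun t : ℝ => Complex.exp ((ω*(t-x):ℝ) * Complex.I)) μ := by
        apply Integrable.mono' (integrable_const (1:ℝ))
        · apply Continuous.aestronglyMeasurable
          exact Complex.continuous_exp.comp
            ((Complex.continuous_ofReal.comp
              (continuous_const.mul (continuous_id.sub continuous_const))).mul continuous_const)
        · refine ae_of_all _ fun t => ?_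
          rw [Complex.norm_exp]
          simp
      have hrw : ∀ t:ℝ, Complex.exp (-(Complex.I*ω*x)) * Complex.exp (Complex.I*ω*t)
          = Complex.exp ((ω*(t-x):ℝ) * Complex.I) := by
        intro t
        rw [← Complex.exp_add]
        congr 1
        push_cast
        ring
      rw [hφ ω, ← integral_const_mul, integral_congr_ae (ae_of_all _ hrw)]
      calc (∫ t : ℝ, Complex.exp ((ω*(t-x):ℝ) * Complex.I) ∂μ).im
          = ∫ t : ℝ, (Complex.exp ((ω*(t-x):ℝ) * Complex.I)).im ∂μ := (integral_im hint2) ▸ rfl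
        _ = ∫ t : ℝ, Real.sin (ω*(t-x)) ∂μ :=
            integral_congr_ae (ae_of_all _ fun t => Complex.exp_ofReal_mul_I_im _)
    have hstep1 : (∫ ω in (1/T)..T, (Complex.exp (-(Complex.I*ω*x)) * φ ω).im / ω)
        = ∫ ω in Ioc (1/T) T, ∫ t, Real.sin (ω*(t-x))/ω ∂μ := by
      rw [intervalIntegral.integral_of_le h1TT]
      apply integral_congr_ae (ae_of_all _ fun ω => ?_)
      rw [hchar ω, ← integral_div]
    -- Fubini
    have hK_meas : AEStronglyMeasurable (fun p : ℝ×ℝ => Real.sin (p.1*(p.2-x))/p.1)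
        (ρ.prod μ) := by
      apply Measurable.aestronglyMeasurable
      exact (Real.measurable_sin.comp
        (measurable_fst.mul (measurable_snd.sub measurable_const))).div measurable_fst
    have hfull : ∀ᵐ p ∂(ρ.prod μ), p.1 ∈ Ioc (1/T) T := by
      rw [ae_iff]
      have hset : {p : ℝ×ℝ | ¬ p.1 ∈ Ioc (1/T) T} = ((Ioc (1/T) T)ᶜ) ×ˢ (univ : Set ℝ) := by
        ext p
        simp
      rw [hset, Measure.prod_prod, hρ, Measure.restrict_apply measurableSet_Ioc.compl]
      simp
    have hKint : Integrable (Function.uncurry fun ω t => Real.sin (ω*(t-x))/ω) (ρ.prod μ) := by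
      apply Integrable.mono' (integrable_const T) hK_meas
      filter_upwards [hfull] with p hp
      have hp1 : 0 < p.1 := lt_of_lt_of_le h1T hp.1.le
      rw [Real.norm_eq_abs, abs_div, abs_of_pos hp1]
      calc |Real.sin (p.1*(p.2-x))| / p.1 ≤ 1 / p.1 := by
            gcongr
            exact Real.abs_sin_le_one _
        _ ≤ T := by
            rw [div_le_iff₀ hp1]
            calc (1:ℝ) = T * (1/T) := by field_simp
              _ ≤ T * p.1 := by
                  apply mul_le_mul_of_nonneg_left hp.1.le hT0.le
    have hswap := integral_integral_swap hKint
    have hstep2 : ∀ t, (∫ ω in Ioc (1/T) T, Real.sin (ω*(t-x))/ω) = G T t := by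
      intro t
      rw [← intervalIntegral.integral_of_le h1TT]
      exact gp_inner2 hT (t-x)
    rw [hstep1, hswap]
    exact integral_congr_ae (ae_of_all _ fun t => hstep2 t)
  -- Step 2: dominated convergence
  have hDCT : Tendsto (fun T => ∫ t, G T t ∂μ) atTop
      (𝓝 (∫ t, (if x < t then π/2 else -(π/2)) ∂μ)) := by
    apply tendsto_integral_filter_of_dominated_convergence (bound := fun _ => 2*M)
    · refine Eventually.of_forall fun T => ?_
      apply Continuous.aestronglyMeasurable
      exact ((gpSi_cont.comp ((continuous_id.sub continuous_const).mul continuous_const)).sub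
        (gpSi_cont.comp ((continuous_id.sub continuous_const).mul continuous_const)))
    · refine Eventually.of_forall fun T => ae_of_all _ fun t => ?_
      rw [Real.norm_eq_abs]
      calc |G T t| ≤ |gpSi ((t-x)*T)| + |gpSi ((t-x)*(1/T))| := abs_sub _ _
        _ ≤ M + M := add_le_add (hM _) (hM _)
        _ = 2*M := by ring
    · exact integrable_const _
    · filter_upwards [hae_ne] with t ht
      have hu : t - x ≠ 0 := sub_ne_zero.mpr ht
      have := tendsto_gpSi_pt hu
      simpa [hG, sub_pos, one_div] using this
  -- Step 3: value of the limit
  have hval : (∫ t, (if x < t then π/2 else -(π/2)) ∂μ) = π * (1/2 - F x) := by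
    have hsplit : (fun t : ℝ => if x < t then π/2 else -(π/2))
        = fun t => (Ioi x).indicator (fun _ => π/2) t + (Iic x).indicator (fun _ => -(π/2)) t := by
      funext t
      rcases lt_or_ge x t with h | h
      · simp [indicator, h, not_le.mpr h]
      · simp [indicator, not_lt.mpr h, h]
    rw [hsplit, integral_add ((integrable_const (π/2)).indicator measurableSet_Ioi)
        ((integrable_const (-(π/2))).indicator measurableSet_Iic),
      integral_indicator_const _ measurableSet_Ioi,
      integral_indicator_const _ measurableSet_Iic,
      measureReal_def, measureReal_def, hIoi, ← hF x]
    rw [hF x] at *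
    simp only [smul_eq_mul]
    ring
  rw [← hval]
  exact Tendsto.congr' (hEq.mono fun T h => h.symm) hDCT
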